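/- Let m and n be positive integers. Suppose there is no prime p and natural number α such that m = n·p^α or n = m·p^α (in particular m ≠ n). Then Φ_m(X) and Φ_n(X) generate the unit ideal of ℤ[X]; equivalently, the quotient ring ℤ[X]/(Φ_m(X), Φ_n(X)) is the zero ring. -/

import Mathlib

open Polynomial

/-- If there is no prime `p` and `α : ℕ` with `m = n * p ^ α` or `n = m * p ^ α`, then
`Φ_m` and `Φ_n` generate the unit ideal of `ℤ[X]`. -/
theorem stmt1 (m n : ℕ) (hm : 0 < m) (hn : 0 < n)
    (h : ¬ ∃ (p α : ℕ), p.Prime ∧ (m = n * p ^ α ∨ n = m * p ^ α)) :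
    Ideal.span {cyclotomic m ℤ, cyclotomic n ℤ} = ⊤ := by
  have hmn : m ≠ n := by
    rintro rfl
    exact h ⟨2, 0, Nat.prime_two, Or.inl (by simp)⟩
  by_contra hne
  obtain ⟨M, hMmax, hMle⟩ := Ideal.exists_le_maximal _ hne
  haveI := hMmax
  set K := ℤ[X] ⧸ M with hK
  letI : Field K := Ideal.Quotient.field M
  set f : ℤ[X] →+* K := Ideal.Quotient.mk M with hf
  set x : K := f X with hx
  -- f agrees with aeval x
  have hfaeval : f = (Polynomial.aeval x : ℤ[X] →ₐ[ℤ] K).toRingHom := by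
    apply Polynomial.ringHom_ext
    · intro a
      have : Subsingleton (ℤ →+* K) := inferInstance
      exact RingHom.congr_fun (Subsingleton.elim (f.comp Polynomial.C)
        ((Polynomial.aeval x : ℤ[X] →ₐ[ℤ] K).toRingHom.comp Polynomial.C)) a
    · simp [hx]
  have key : ∀ k, cyclotomic k ℤ ∈ M → (cyclotomic k K).eval x = 0 := by
    intro k hk
    have h0 : f (cyclotomic k ℤ) = 0 := Ideal.Quotient.eq_zero_iff_mem.2 hk
    rw [hfaeval] at h0
    rwa [AlgHom.toRingHom_eq_coe, RingHom.coe_coe, Polynomial.aeval_def,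
      Polynomial.eval₂_eq_eval_map, map_cyclotomic] at h0
  have hmem_m : (cyclotomic m K).eval x = 0 :=
    key m (hMle (Ideal.subset_span (by simp)))
  have hmem_n : (cyclotomic n K).eval x = 0 :=
    key n (hMle (Ideal.subset_span (by simp)))
  -- Characteristic analysis
  rcases CharP.char_is_prime_or_zero K (ringChar K) with hp | hp0
  · -- positive characteristic p
    set p := ringChar K with hpdef
    haveI : Fact p.Prime := ⟨hp⟩
    haveI : CharP K p := ringChar.charP K
    -- p-free parts
    set a := m.factorization p with ha
    set b := n.factorization p with hb
    set m' := m / p ^ a with hm'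
    set n' := n / p ^ b with hn'
    have hmeq : p ^ a * m' = m := Nat.ordProj_mul_ordCompl_eq_self m p
    have hneq : p ^ b * n' = n := Nat.ordProj_mul_ordCompl_eq_self n p
    have hpm' : ¬ p ∣ m' := Nat.not_dvd_ordCompl hp hm.ne'
    have hpn' : ¬ p ∣ n' := Nat.not_dvd_ordCompl hp hn.ne'
    haveI : NeZero ((m' : K)) := NeZero.of_not_dvd K hpm'
    haveI : NeZero ((n' : K)) := NeZero.of_not_dvd K hpn'
    have hrm : IsPrimitiveRoot x m' := by
      rw [← hmeq] at hmem_m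
      exact (isRoot_cyclotomic_prime_pow_mul_iff_of_charP).1 hmem_m
    have hrn : IsPrimitiveRoot x n' := by
      rw [← hneq] at hmem_n
      exact (isRoot_cyclotomic_prime_pow_mul_iff_of_charP).1 hmem_n
    have hm'n' : m' = n' := hrm.unique hrn
    rcases le_total b a with hba | hab
    · refine h ⟨p, a - b, hp, Or.inl ?_⟩
      rw [← hmeq, ← hneq, hm'n']
      rw [mul_comm (p ^ b) n', mul_assoc, ← pow_add]
      rw [mul_comm (p ^ a) n']
      congr 1
      rw [Nat.add_sub_cancel' hba]
    · refine h ⟨p, b - a, hp, Or.inr ?_⟩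
      rw [← hmeq, ← hneq, hm'n']
      rw [mul_comm (p ^ a) n', mul_assoc, ← pow_add]
      rw [mul_comm (p ^ b) n']
      congr 1
      rw [Nat.add_sub_cancel' hab]
  · -- characteristic zero
    haveI : CharP K 0 := hp0 ▸ ringChar.charP K
    haveI : CharZero K := CharP.charP_to_charZero K
    obtain ⟨u, v, huv⟩ := cyclotomic.isCoprime_rat (n := m) (m := n) hmn
    have := congrArg (Polynomial.aeval x : ℚ[X] →ₐ[ℚ] K) huv
    rw [map_add, map_mul, map_mul, map_one] at this
    have hqm : (Polynomial.aeval x) (cyclotomic m ℚ) = 0 := by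
      rw [Polynomial.aeval_def, Polynomial.eval₂_eq_eval_map, map_cyclotomic]
      exact hmem_m
    have hqn : (Polynomial.aeval x) (cyclotomic n ℚ) = 0 := by
      rw [Polynomial.aeval_def, Polynomial.eval₂_eq_eval_map, map_cyclotomic]
      exact hmem_n
    rw [hqm, hqn, mul_zero, mul_zero, add_zero] at this
    exact zero_ne_one this
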